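/- Let V be a real vector space of dimension 4n, and Ω : V × V → ℂ an ℝ-bilinear alternating form such that for every nonzero v ∈ V there exists w ∈ V with Ω(v,w) ≠ 0 (non-degeneracy). Let Ω_ℂ denote the ℂ-bilinear alternating extension of Ω to the complexification V_ℂ = ℂ ⊗_ℝ V, and assume that the (n+1)-fold wedge power of Ω_ℂ vanishes: Ω_ℂ ∧ ⋯ ∧ Ω_ℂ (n+1 factors) = 0 as an alternating (2n+2)-form on V_ℂ. Then the subspace K = { w ∈ V_ℂ : Ω_ℂ(w, u) = 0 for all u ∈ V_ℂ } satisfies dim_ℂ K = 2n and K ∩ V = 0 (where V embeds in V_ℂ as v ↦ 1⊗v); consequently there is a unique ℝ-linear endomorphism J of V with J² = −Id whose ℂ-linear extension has K as its (−i)-eigenspace. -/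

import Mathlib

open Equiv Finset

lemma perm_sum_ne (n : ℕ) (S : Fin (2*n+2) → Fin (2*n+2) → ℂ)
    (hS : ∀ a b : Fin (2*n+2), S a b =
      if (a:ℕ)/2 = (b:ℕ)/2 ∧ a ≠ b then (if (a:ℕ)%2 = 0 then 1 else -1) else 0) :
    (∑ σ : Perm (Fin (2*n+2)), ((Perm.sign σ : ℤ) : ℂ) *
      ∏ i : Fin (n+1), S (σ ⟨2*i.1, by have := i.2; omega⟩)
        (σ ⟨2*i.1+1, by have := i.2; omega⟩)) ≠ 0 := by
  classical
  set E : Fin (n+1) × Fin 2 ≃ Fin (2*n+2) :=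
    finProdFinEquiv.trans (finCongr (by omega)) with hEdef
  have hE : ∀ (i : Fin (n+1)) (j : Fin 2), (E (i,j) : ℕ) = 2 * i + j := by
    intro i j; simp [hEdef, finCongr, mul_comm, add_comm]
  set good : Perm (Fin (2*n+2)) → Prop := fun σ => ∀ i : Fin (n+1),
    ((σ ⟨2*i.1+1, by have := i.2; omega⟩ : Fin (2*n+2)) : ℕ) =
      2 * (((σ ⟨2*i.1, by have := i.2; omega⟩ : Fin (2*n+2)) : ℕ)/2) +
        (1 - ((σ ⟨2*i.1, by have := i.2; omega⟩ : Fin (2*n+2)) : ℕ) % 2) with hgood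
  have key : ∀ σ : Perm (Fin (2*n+2)),
      ((Perm.sign σ : ℤ) : ℂ) * (∏ i : Fin (n+1), S (σ ⟨2*i.1, by have := i.2; omega⟩)
        (σ ⟨2*i.1+1, by have := i.2; omega⟩)) = if good σ then 1 else 0 := by
    intro σ
    by_cases hg : good σ
    · rw [if_pos hg]
      rw [hgood] at hg
      have hπlt : ∀ i : Fin (n+1), ((σ ⟨2*i.1, by have := i.2; omega⟩ : Fin (2*n+2)) : ℕ)/2 < n+1 := by
        intro i; have := (σ ⟨2*i.1, by have := i.2; omega⟩ : Fin (2*n+2)).2; omega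
      set π0 : Fin (n+1) → Fin (n+1) := fun i => ⟨_, hπlt i⟩ with hπ0
      have hπinj : Function.Injective π0 := by
        intro i i' h
        simp only [hπ0, Fin.mk.injEq] at h
        by_cases heq : (σ ⟨2*i.1, by have := i.2; omega⟩ : Fin (2*n+2)) =
            (σ ⟨2*i'.1, by have := i'.2; omega⟩ : Fin (2*n+2))
        · have := σ.injective heq; simp [Fin.ext_iff] at this; exact Fin.ext this
        · exfalso
          have hvne : ((σ ⟨2*i.1, by have := i.2; omega⟩ : Fin (2*n+2)) : ℕ) ≠
              ((σ ⟨2*i'.1, by have := i'.2; omega⟩ : Fin (2*n+2)) : ℕ) := fun hv => heq (Fin.ext hv)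
          have h1 := hg i
          have hb := (σ ⟨2*i'.1, by have := i'.2; omega⟩ : Fin (2*n+2)).2
          have ha := (σ ⟨2*i.1, by have := i.2; omega⟩ : Fin (2*n+2)).2
          have : (σ ⟨2*i'.1, by have := i'.2; omega⟩ : Fin (2*n+2)) =
              (σ ⟨2*i.1+1, by have := i.2; omega⟩ : Fin (2*n+2)) := by
            apply Fin.ext; omega
          have := σ.injective this
          simp [Fin.ext_iff] at this; omega
      have hπbij := Finite.injective_iff_bijective.mp hπinj
      set πe : Perm (Fin (n+1)) := Equiv.ofBijective π0 hπbij with hπe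
      have hπeval : ∀ i, πe i = π0 i := fun i => rfl
      set c : Fin (n+1) → Perm (Fin 2) := fun k =>
        if ((σ ⟨2*(πe.symm k).1, by have := (πe.symm k).2; omega⟩ : Fin (2*n+2)) : ℕ) % 2 = 1
        then Equiv.swap 0 1 else 1 with hc
      have hcπ : ∀ i : Fin (n+1), c (πe i) =
          if ((σ ⟨2*i.1, by have := i.2; omega⟩ : Fin (2*n+2)) : ℕ) % 2 = 1
          then Equiv.swap 0 1 else 1 := by
        intro i; rw [hc]
        simp only [Equiv.symm_apply_apply]
      have hσ : σ = E.permCongr ((prodCongrLeft (fun _ => πe)).trans (prodCongrRight c)) := by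
        apply Equiv.ext; intro k
        obtain ⟨⟨i, j⟩, rfl⟩ := E.surjective k
        simp only [Equiv.permCongr_apply, Equiv.symm_apply_apply, Equiv.trans_apply,
          Equiv.prodCongrLeft_apply, Equiv.prodCongrRight_apply]
        have hEi0 : E (i, (⟨0, by omega⟩ : Fin 2)) = ⟨2*i.1, by have := i.2; omega⟩ := by
          apply Fin.ext; simp [hE]
        have hEi1 : E (i, (⟨1, by omega⟩ : Fin 2)) = ⟨2*i.1+1, by have := i.2; omega⟩ := by
          apply Fin.ext; simp [hE]
        have hgi := hg i
        have ha := (σ ⟨2*i.1, by have := i.2; omega⟩ : Fin (2*n+2)).2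
        have hπv : (πe i : ℕ) = ((σ ⟨2*i.1, by have := i.2; omega⟩ : Fin (2*n+2)) : ℕ)/2 := rfl
        obtain ⟨jv, hj⟩ := j
        interval_cases jv
        · rw [hEi0]
          apply Fin.ext
          conv_rhs => rw [hE]
          rw [hcπ i]
          by_cases hpar : ((σ ⟨2*i.1, by have := i.2; omega⟩ : Fin (2*n+2)) : ℕ) % 2 = 1
          · rw [if_pos hpar]
            have hsw : (((Equiv.swap 0 1 : Equiv.Perm (Fin 2))) ⟨0, hj⟩ : ℕ) = 1 := rfl
            rw [hsw, hπv]; omega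
          · rw [if_neg hpar]
            have hsw : (((1 : Equiv.Perm (Fin 2))) ⟨0, hj⟩ : ℕ) = 0 := rfl
            rw [hsw, hπv]; omega
        · rw [hEi1]
          apply Fin.ext
          conv_rhs => rw [hE]
          rw [hcπ i]
          by_cases hpar : ((σ ⟨2*i.1, by have := i.2; omega⟩ : Fin (2*n+2)) : ℕ) % 2 = 1
          · rw [if_pos hpar]
            have hsw : (((Equiv.swap 0 1 : Equiv.Perm (Fin 2))) ⟨1, hj⟩ : ℕ) = 0 := rfl
            rw [hsw, hπv]; omega
          · rw [if_neg hpar]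
            have hsw : (((1 : Equiv.Perm (Fin 2))) ⟨1, hj⟩ : ℕ) = 1 := rfl
            rw [hsw, hπv]; omega
      -- sign computation
      have hsign : Perm.sign σ = ∏ k : Fin (n+1), Perm.sign (c k) := by
        rw [hσ]
        rw [Equiv.Perm.sign_permCongr]
        have : ((prodCongrLeft (fun _ : Fin 2 => πe)).trans (prodCongrRight c) : Perm (Fin (n+1) × Fin 2))
            = (prodCongrRight c) * (prodCongrLeft (fun _ : Fin 2 => πe)) := rfl
        rw [this, map_mul, Equiv.Perm.sign_prodCongrRight, Equiv.Perm.sign_prodCongrLeft]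
        simp [Finset.prod_const]
      -- product of S values
      have hprod : (∏ i : Fin (n+1), S (σ ⟨2*i.1, by have := i.2; omega⟩)
          (σ ⟨2*i.1+1, by have := i.2; omega⟩)) =
          ∏ i : Fin (n+1), (if ((σ ⟨2*i.1, by have := i.2; omega⟩ : Fin (2*n+2)) : ℕ) % 2 = 1
            then (-1 : ℂ) else 1) := by
        apply Finset.prod_congr rfl
        intro i _
        rw [hS]
        have hgi := hg i
        have ha := (σ ⟨2*i.1, by have := i.2; omega⟩ : Fin (2*n+2)).2
        have hne : σ ⟨2*i.1, by have := i.2; omega⟩ ≠ σ ⟨2*i.1+1, by have := i.2; omega⟩ := by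
          intro h; have := σ.injective h; simp [Fin.ext_iff] at this
        rw [if_pos ⟨by omega, hne⟩]
        by_cases hpar : ((σ ⟨2*i.1, by have := i.2; omega⟩ : Fin (2*n+2)) : ℕ) % 2 = 1
        · rw [if_pos hpar, if_neg (by omega)]
        · rw [if_neg hpar, if_pos (by omega)]
      rw [hprod, hsign]
      have hsc : ∀ k, ((Perm.sign (c k) : ℤ) : ℂ) =
          if ((σ ⟨2*(πe.symm k).1, by have := (πe.symm k).2; omega⟩ : Fin (2*n+2)) : ℕ) % 2 = 1
          then (-1 : ℂ) else 1 := by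
        intro k
        simp only [hc]
        split_ifs with hpar <;> simp
      push_cast
      rw [Finset.prod_congr rfl (fun k _ => hsc k)]
      rw [← Equiv.prod_comp πe (fun k =>
        if ((σ ⟨2*(πe.symm k).1, by have := (πe.symm k).2; omega⟩ : Fin (2*n+2)) : ℕ) % 2 = 1
        then (-1 : ℂ) else 1)]
      simp only [Equiv.symm_apply_apply]
      rw [← Finset.prod_mul_distrib]
      rw [Finset.prod_congr rfl (fun i _ => ?_), Finset.prod_const_one]
      by_cases hpar : ((σ ⟨2*i.1, by have := i.2; omega⟩ : Fin (2*n+2)) : ℕ) % 2 = 1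
      · rw [if_pos hpar]; ring
      · rw [if_neg hpar]; ring
    · rw [if_neg hg]
      rw [hgood] at hg
      obtain ⟨i, hi⟩ := not_forall.mp hg
      have hzero : S (σ ⟨2*i.1, by have := i.2; omega⟩) (σ ⟨2*i.1+1, by have := i.2; omega⟩) = 0 := by
        rw [hS]
        have hne : σ ⟨2*i.1, by have := i.2; omega⟩ ≠ σ ⟨2*i.1+1, by have := i.2; omega⟩ := by
          intro h; have := σ.injective h; simp [Fin.ext_iff] at this
        rw [if_neg]
        rintro ⟨h1, h2⟩
        apply hi
        have ha := (σ ⟨2*i.1, by have := i.2; omega⟩ : Fin (2*n+2)).2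
        have hb := (σ ⟨2*i.1+1, by have := i.2; omega⟩ : Fin (2*n+2)).2
        have hne' : ((σ ⟨2*i.1, by have := i.2; omega⟩ : Fin (2*n+2)) : ℕ) ≠
          ((σ ⟨2*i.1+1, by have := i.2; omega⟩ : Fin (2*n+2)) : ℕ) := fun h => hne (Fin.ext h)
        omega
      rw [Finset.prod_eq_zero (Finset.mem_univ i) hzero, mul_zero]
  rw [Finset.sum_congr rfl (fun σ _ => key σ), Finset.sum_boole]
  have hid : (1 : Perm (Fin (2*n+2))) ∈ Finset.univ.filter good := by
    simp only [Finset.mem_filter, Finset.mem_univ, true_and, hgood]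
    intro i; simp only [Perm.one_apply]; omega
  have hpos : 0 < (Finset.univ.filter good).card := Finset.card_pos.2 ⟨1, hid⟩
  simpa using hpos.ne'
open Module

universe u

lemma exists_symplectic : ∀ (m : ℕ) (W : Type u) [AddCommGroup W] [Module ℂ W]
    [FiniteDimensional ℂ W] (B : W →ₗ[ℂ] W →ₗ[ℂ] ℂ)
    (_ : ∀ x y : W, B x y = - B y x)
    (_ : finrank ℂ (LinearMap.ker B) + 2 * m ≤ finrank ℂ W + 1),
    ∃ e f : Fin m → W, (∀ i j, B (e i) (e j) = 0) ∧ (∀ i j, B (f i) (f j) = 0) ∧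
      (∀ i j, B (e i) (f j) = if i = j then 1 else 0) := by
  intro m
  induction m with
  | zero =>
    intro W _ _ _ B _ _
    exact ⟨fun i => i.elim0, fun i => i.elim0, fun i => i.elim0, fun i => i.elim0,
      fun i => i.elim0⟩
  | succ m IH =>
    intro W _ _ _ B hskew hrk
    classical
    have hWfin : finrank ℂ (LinearMap.ker B) < finrank ℂ W := by
      rcases lt_or_ge (finrank ℂ (LinearMap.ker B)) (finrank ℂ W) with h | h
      · exact h
      · exfalso
        have : finrank ℂ (LinearMap.ker B) ≤ finrank ℂ W := Submodule.finrank_le _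
        omega
    have hBne : ∃ e : W, B e ≠ 0 := by
      by_contra h
      push_neg at h
      have : LinearMap.ker B = ⊤ := by
        rw [LinearMap.ker_eq_top]; ext x y; simp [h x]
      rw [this, finrank_top] at hWfin; omega
    obtain ⟨e, hBe⟩ := hBne
    obtain ⟨f0, hf0⟩ := DFunLike.ne_iff.mp hBe
    simp only [LinearMap.zero_apply] at hf0
    set f : W := (B e f0)⁻¹ • f0 with hf
    have hBef : B e f = 1 := by
      rw [hf, map_smul]; simp; field_simp
    have two_ne : (2:ℂ) ≠ 0 := two_ne_zero
    have hBee : B e e = 0 := by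
      have h := hskew e e
      have h2 : (2:ℂ) * B e e = 0 := by linear_combination h
      rcases mul_eq_zero.mp h2 with h' | h'
      · exact absurd h' two_ne
      · exact h'
    have hBff : B f f = 0 := by
      have h := hskew f f
      have h2 : (2:ℂ) * B f f = 0 := by linear_combination h
      rcases mul_eq_zero.mp h2 with h' | h'
      · exact absurd h' two_ne
      · exact h'
    have hBfe : B f e = -1 := by rw [hskew f e, hBef]
    set U : Submodule ℂ W := LinearMap.ker (B e) ⊓ LinearMap.ker (B f) with hU
    have hmemU : ∀ x : W, x ∈ U ↔ B e x = 0 ∧ B f x = 0 := by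
      intro x; simp [hU, Submodule.mem_inf, LinearMap.mem_ker]
    have hdecomp : ∀ x : W, x - (B e x) • f + (B f x) • e ∈ U := by
      intro x
      rw [hmemU]
      constructor
      · simp only [map_add, map_sub, map_smul, smul_eq_mul, hBef, hBee]; ring
      · simp only [map_add, map_sub, map_smul, smul_eq_mul, hBff, hBfe]; ring
    set B' : U →ₗ[ℂ] U →ₗ[ℂ] ℂ := LinearMap.compl₁₂ B U.subtype U.subtype with hB'
    have hB'app : ∀ u v : U, B' u v = B (u : W) (v : W) := fun u v => rfl
    have hskew' : ∀ x y : U, B' x y = - B' y x := fun x y => hskew _ _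
    -- ker B ≤ U
    have hKU : LinearMap.ker B ≤ U := by
      intro k hk
      rw [LinearMap.mem_ker] at hk
      rw [hmemU]
      constructor
      · rw [hskew]; rw [hk]; simp
      · rw [hskew]; rw [hk]; simp
    -- (ker B').map U.subtype ≤ ker B
    have hK'K : (LinearMap.ker B').map U.subtype ≤ LinearMap.ker B := by
      intro x hx
      obtain ⟨u, hu, rfl⟩ := Submodule.mem_map.mp hx
      rw [LinearMap.mem_ker] at hu ⊢
      apply LinearMap.ext
      intro x
      simp only [Submodule.subtype_apply, LinearMap.zero_apply]
      have hx := hdecomp x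
      have hBue : B (u : W) e = 0 := by
        rw [hskew]; have := ((hmemU _).mp u.2).1; rw [this]; simp
      have hBuf : B (u : W) f = 0 := by
        rw [hskew]; have := ((hmemU _).mp u.2).2; rw [this]; simp
      have hBuu : B (u : W) (x - (B e x) • f + (B f x) • e) = 0 := by
        have : B' u ⟨_, hx⟩ = 0 := by rw [hu]; rfl
        exact this
      have : B (u : W) x = B (u : W) (x - (B e x) • f + (B f x) • e)
          + (B e x) * B (u : W) f - (B f x) * B (u : W) e := by
        simp only [map_add, map_sub, map_smul, smul_eq_mul]; ring
      rw [this, hBuu, hBue, hBuf]; ring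
    have hUrank : finrank ℂ W ≤ finrank ℂ U + 2 := by
      have h1 : finrank ℂ (LinearMap.ker (B e)) + 1 ≥ finrank ℂ W := by
        have := LinearMap.finrank_range_add_finrank_ker (B e)
        have h2 : finrank ℂ (LinearMap.range (B e)) ≤ 1 := by
          have := Submodule.finrank_le (LinearMap.range (B e))
          simpa using this
        omega
      have h1' : finrank ℂ (LinearMap.ker (B f)) + 1 ≥ finrank ℂ W := by
        have := LinearMap.finrank_range_add_finrank_ker (B f)
        have h2 : finrank ℂ (LinearMap.range (B f)) ≤ 1 := by
          have := Submodule.finrank_le (LinearMap.range (B f))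
          simpa using this
        omega
      have hsup := Submodule.finrank_sup_add_finrank_inf_eq
        (LinearMap.ker (B e)) (LinearMap.ker (B f))
      have hsuple : finrank ℂ ↥(LinearMap.ker (B e) ⊔ LinearMap.ker (B f)) ≤ finrank ℂ W :=
        Submodule.finrank_le _
      rw [hU]
      omega
    have hk'le : finrank ℂ (LinearMap.ker B') ≤ finrank ℂ (LinearMap.ker B) := by
      rw [← Submodule.finrank_map_subtype_eq U (LinearMap.ker B')]
      exact Submodule.finrank_mono hK'K
    obtain ⟨e', f', he'e', hf'f', he'f'⟩ := IH U B' hskew' (by omega)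
    refine ⟨Fin.cons e (fun i => (e' i : W)), Fin.cons f (fun i => (f' i : W)), ?_, ?_, ?_⟩
    · intro i j
      have hmem : ∀ i, B e (e' i : W) = 0 := fun i => ((hmemU _).mp (e' i).2).1
      refine Fin.cases ?_ (fun i => ?_) i <;> refine Fin.cases ?_ (fun j => ?_) j <;>
        simp only [Fin.cons_zero, Fin.cons_succ]
      · exact hBee
      · exact hmem j
      · rw [hskew]; rw [hmem i]; simp
      · exact he'e' i j
    · intro i j
      have hmem : ∀ i, B f (f' i : W) = 0 := fun i => ((hmemU _).mp (f' i).2).2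
      refine Fin.cases ?_ (fun i => ?_) i <;> refine Fin.cases ?_ (fun j => ?_) j <;>
        simp only [Fin.cons_zero, Fin.cons_succ]
      · exact hBff
      · exact hmem j
      · rw [hskew]; rw [hmem i]; simp
      · exact hf'f' i j
    · intro i j
      have hmemf : ∀ i, B e (f' i : W) = 0 := fun i => ((hmemU _).mp (f' i).2).1
      have hmeme : ∀ i, B f (e' i : W) = 0 := fun i => ((hmemU _).mp (e' i).2).2
      refine Fin.cases ?_ (fun i => ?_) i <;> refine Fin.cases ?_ (fun j => ?_) j <;>
        simp only [Fin.cons_zero, Fin.cons_succ]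
      · simp [hBef]
      · simp [hmemf j, (Fin.succ_ne_zero j).symm]
      · rw [hskew]; rw [hmeme i]; simp [Fin.succ_ne_zero i]
      · have h := he'f' i j
        rw [hB'app] at h
        rw [h]
        by_cases h : i = j
        · subst h; simp
        · simp [h, fun hc => h (Fin.succ_injective _ hc)]

open scoped TensorProduct
open Module

set_option maxHeartbeats 1600000

/-- pointwise content of Theorem 3.6. Let `V` be a real vector space of
dimension `4n` and `Ω` an ℝ-bilinear alternating ℂ-valued form on `V`, non-degenerate in the
sense that every nonzero `v ∈ V` pairs nontrivially with some `w`. Let `ΩC` be the ℂ-bilinear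
extension of `Ω` to `ℂ ⊗[ℝ] V` (characterized by its values on real vectors), and suppose the
`(n+1)`-fold wedge power of `ΩC` vanishes (expressed via full antisymmetrization, a nonzero
multiple of the wedge power). Then `K = ker ΩC` satisfies `dim_ℂ K = 2n` and `K ∩ V = 0`, and
there is a unique ℝ-linear `J` with `J² = -Id` whose ℂ-linear extension has `K` as its
`(-i)`-eigenspace. -/
theorem degenerate_form_gives_complex_structure
    (n : ℕ) (V : Type*) [AddCommGroup V] [Module ℝ V] [FiniteDimensional ℝ V]
    (hdim : Module.finrank ℝ V = 4 * n)
    (Ω : V →ₗ[ℝ] V →ₗ[ℝ] ℂ) (hΩalt : ∀ v : V, Ω v v = 0)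
    (hΩnd : ∀ v : V, v ≠ 0 → ∃ w : V, Ω v w ≠ 0)
    (ΩC : (ℂ ⊗[ℝ] V) →ₗ[ℂ] (ℂ ⊗[ℝ] V) →ₗ[ℂ] ℂ)
    (hΩC : ∀ v w : V, ΩC ((1 : ℂ) ⊗ₜ[ℝ] v) ((1 : ℂ) ⊗ₜ[ℝ] w) = Ω v w)
    (hpow : ∀ v : Fin (2 * n + 2) → (ℂ ⊗[ℝ] V),
        (∑ σ : Equiv.Perm (Fin (2 * n + 2)), ((Equiv.Perm.sign σ : ℤ) : ℂ) *
          ∏ i : Fin (n + 1),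
            ΩC (v (σ ⟨2 * i.1, by have := i.2; omega⟩))
              (v (σ ⟨2 * i.1 + 1, by have := i.2; omega⟩))) = 0) :
    Module.finrank ℂ (LinearMap.ker ΩC) = 2 * n ∧
    (∀ v : V, (1 : ℂ) ⊗ₜ[ℝ] v ∈ LinearMap.ker ΩC → v = 0) ∧
    (∃! J : Module.End ℝ V, J * J = -1 ∧
      Module.End.eigenspace (LinearMap.baseChange ℂ (J : V →ₗ[ℝ] V)) (-Complex.I) =
        LinearMap.ker ΩC) := by
  classical
  -- skewness of Ω
  have hΩskew : ∀ v w : V, Ω v w = - Ω w v := by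
    intro v w
    have h := hΩalt (v + w)
    simp only [map_add, LinearMap.add_apply, hΩalt] at h
    linear_combination h
  -- value on simple tensors
  have hsimple : ∀ (c d : ℂ) (v w : V), ΩC (c ⊗ₜ[ℝ] v) (d ⊗ₜ[ℝ] w) = c * d * Ω v w := by
    intro c d v w
    have h1 : (c : ℂ) ⊗ₜ[ℝ] v = c • ((1:ℂ) ⊗ₜ[ℝ] v) := by
      rw [TensorProduct.smul_tmul']; simp
    have h2 : (d : ℂ) ⊗ₜ[ℝ] w = d • ((1:ℂ) ⊗ₜ[ℝ] w) := by
      rw [TensorProduct.smul_tmul']; simp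
    rw [h1, h2]
    simp only [map_smul, LinearMap.smul_apply, smul_eq_mul, hΩC]
    ring
  -- skewness of ΩC
  have hskew : ∀ x y : ℂ ⊗[ℝ] V, ΩC x y = - ΩC y x := by
    intro x y
    induction x using TensorProduct.induction_on with
    | zero => simp
    | tmul c v =>
      induction y using TensorProduct.induction_on with
      | zero => simp
      | tmul d w => rw [hsimple, hsimple, hΩskew]; ring
      | add y1 y2 h1 h2 =>
        simp only [map_add, LinearMap.add_apply, h1, h2]; ring
    | add x1 x2 h1 h2 =>
      simp only [map_add, LinearMap.add_apply, h1, h2]; ring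
  -- the real-vector injection and projection
  set ι : V →ₗ[ℝ] ℂ ⊗[ℝ] V := TensorProduct.mk ℝ ℂ V 1 with hιdef
  have hι : ∀ v : V, ι v = (1:ℂ) ⊗ₜ[ℝ] v := fun v => rfl
  set L : ℂ ⊗[ℝ] V →ₗ[ℝ] V :=
    TensorProduct.lift ((LinearMap.lsmul ℝ V).comp Complex.reLm) with hLdef
  have hL : ∀ (c : ℂ) (v : V), L (c ⊗ₜ[ℝ] v) = c.re • v := by
    intro c v; simp [hLdef]
  have hL1 : ∀ v : V, L ((1:ℂ) ⊗ₜ[ℝ] v) = v := by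
    intro v; rw [hL]; simp
  have hιinj : ∀ v : V, (1:ℂ) ⊗ₜ[ℝ] v = 0 → v = 0 := by
    intro v hv
    have := congrArg L hv
    rw [hL1] at this; simpa using this
  -- conjugation
  set cj : ℂ ⊗[ℝ] V →ₗ[ℝ] ℂ ⊗[ℝ] V :=
    LinearMap.rTensor V Complex.conjAe.toLinearMap with hcjdef
  have hcjt : ∀ (c : ℂ) (v : V), cj (c ⊗ₜ[ℝ] v) = (starRingEnd ℂ c) ⊗ₜ[ℝ] v := by
    intro c v; simp [hcjdef]
  have hcj_invol : ∀ x, cj (cj x) = x := by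
    intro x
    induction x using TensorProduct.induction_on with
    | zero => simp
    | tmul c v => rw [hcjt, hcjt]; simp
    | add x1 x2 h1 h2 => rw [map_add, map_add, h1, h2]
  have hcj_smul : ∀ (z : ℂ) (x), cj (z • x) = (starRingEnd ℂ z) • cj x := by
    intro z x
    induction x using TensorProduct.induction_on with
    | zero => simp
    | tmul c v =>
      rw [hcjt]
      have : z • (c ⊗ₜ[ℝ] v) = (z * c) ⊗ₜ[ℝ] v := rfl
      rw [this, hcjt, map_mul]
      rfl
    | add x1 x2 h1 h2 => rw [smul_add, map_add, h1, h2, map_add, smul_add]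
  have hdecW : ∀ x : ℂ ⊗[ℝ] V, ∃ a b : V,
      x = (1:ℂ) ⊗ₜ[ℝ] a + Complex.I • ((1:ℂ) ⊗ₜ[ℝ] b) := by
    intro x
    induction x using TensorProduct.induction_on with
    | zero => exact ⟨0, 0, by simp⟩
    | tmul c v =>
      refine ⟨c.re • v, c.im • v, ?_⟩
      have h1 : (1:ℂ) ⊗ₜ[ℝ] (c.re • v) = (c.re : ℂ) ⊗ₜ[ℝ] v := by
        rw [← TensorProduct.smul_tmul, Complex.real_smul, mul_one]
      have h2 : Complex.I • ((1:ℂ) ⊗ₜ[ℝ] (c.im • v)) = ((c.im : ℂ) * Complex.I) ⊗ₜ[ℝ] v := by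
        rw [TensorProduct.smul_tmul', smul_eq_mul, mul_one, ← TensorProduct.smul_tmul,
          Complex.real_smul]
      rw [h1, h2, ← TensorProduct.add_tmul]
      congr 1
      simp [Complex.ext_iff]
    | add x1 x2 h1 h2 =>
      obtain ⟨a1, b1, e1⟩ := h1
      obtain ⟨a2, b2, e2⟩ := h2
      exact ⟨a1 + a2, b1 + b2, by rw [e1, e2]; simp [TensorProduct.tmul_add, smul_add]; abel⟩
  set Lim : ℂ ⊗[ℝ] V →ₗ[ℝ] V :=
    TensorProduct.lift ((LinearMap.lsmul ℝ V).comp Complex.imLm) with hLimdef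
  have hLim : ∀ (c : ℂ) (v : V), Lim (c ⊗ₜ[ℝ] v) = c.im • v := by
    intro c v; simp [hLimdef]
  have hcj_real : ∀ x : ℂ ⊗[ℝ] V, cj x = x → ∃ a : V, x = (1:ℂ) ⊗ₜ[ℝ] a := by
    intro x hx
    obtain ⟨a, b, rfl⟩ := hdecW x
    refine ⟨a, ?_⟩
    have hIb : Complex.I • ((1:ℂ) ⊗ₜ[ℝ] b) = Complex.I ⊗ₜ[ℝ] b := by
      rw [TensorProduct.smul_tmul', smul_eq_mul, mul_one]
    have hcjx : cj ((1:ℂ) ⊗ₜ[ℝ] a + Complex.I • ((1:ℂ) ⊗ₜ[ℝ] b)) =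
        (1:ℂ) ⊗ₜ[ℝ] a + (-Complex.I) ⊗ₜ[ℝ] b := by
      rw [hIb, map_add, hcjt, hcjt]
      congr 2 <;> simp [Complex.ext_iff]
    rw [hcjx] at hx
    have hb' := congrArg Lim hx
    rw [hIb] at hb'
    simp only [map_add, hLim] at hb'
    simp only [Complex.one_im, Complex.neg_im, Complex.I_im, zero_smul, one_smul,
      neg_smul, zero_add] at hb'
    -- hb' : -b = b  (or b = -b)
    have hb : b = 0 := by
      have h2 : (2:ℝ) • b = 0 := by
        rw [two_smul]
        nth_rewrite 1 [← hb']
        abel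
      rcases smul_eq_zero.mp h2 with h | h
      · norm_num at h
      · exact h
    rw [hb]
    simp
  -- the kernel
  set K : Submodule ℂ (ℂ ⊗[ℝ] V) := LinearMap.ker ΩC with hKdef
  have claim2 : ∀ v : V, (1:ℂ) ⊗ₜ[ℝ] v ∈ K → v = 0 := by
    intro v hv
    by_contra hne
    obtain ⟨w, hw⟩ := hΩnd v hne
    apply hw
    rw [← hΩC v w]
    rw [hKdef, LinearMap.mem_ker] at hv
    rw [hv, LinearMap.zero_apply]
  -- the conjugate form
  set ΩC' : (ℂ ⊗[ℝ] V) →ₗ[ℂ] (ℂ ⊗[ℝ] V) →ₗ[ℂ] ℂ := LinearMap.mk₂ ℂ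
    (fun x y => star (ΩC (cj x) (cj y)))
    (fun x x' y => by
      rw [map_add, map_add, LinearMap.add_apply, star_add])
    (fun c x y => by
      rw [hcj_smul, map_smul, LinearMap.smul_apply, smul_eq_mul, star_mul']
      simp [Complex.star_def, smul_eq_mul])
    (fun x y y' => by
      rw [map_add, map_add, star_add])
    (fun c x y => by
      rw [hcj_smul, map_smul, smul_eq_mul, star_mul']
      simp [Complex.star_def, smul_eq_mul])
    with hΩC'def
  have hΩC'app : ∀ x y, ΩC' x y = star (ΩC (cj x) (cj y)) := fun x y => rfl
  set K' : Submodule ℂ (ℂ ⊗[ℝ] V) := LinearMap.ker ΩC' with hK'def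
  have cj_surj : ∀ y, ∃ z, cj z = y := fun y => ⟨cj y, hcj_invol y⟩
  have hK'mem : ∀ x, x ∈ K' ↔ cj x ∈ K := by
    intro x
    rw [hK'def, hKdef, LinearMap.mem_ker, LinearMap.mem_ker]
    constructor
    · intro h
      apply LinearMap.ext; intro y
      obtain ⟨z, rfl⟩ := cj_surj y
      have h0 : ΩC' x z = 0 := by rw [h]; rfl
      rw [hΩC'app] at h0
      rw [LinearMap.zero_apply]
      exact star_eq_zero.mp h0
    · intro h
      apply LinearMap.ext; intro y
      rw [LinearMap.zero_apply]
      have : ΩC' x y = star (ΩC (cj x) (cj y)) := hΩC'app x y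
      rw [this, h, LinearMap.zero_apply, star_zero]
  have hKmem' : ∀ x, x ∈ K ↔ cj x ∈ K' := by
    intro x
    rw [hK'mem (cj x), hcj_invol]
  -- disjointness
  have hdisj : ∀ x, x ∈ K → x ∈ K' → x = 0 := by
    intro x hxK hxK'
    have hcjxK : cj x ∈ K := (hK'mem x).mp hxK'
    have h1 : cj (x + cj x) = x + cj x := by rw [map_add, hcj_invol]; abel
    obtain ⟨a, ha⟩ := hcj_real _ h1
    have haK : (1:ℂ) ⊗ₜ[ℝ] a ∈ K := ha ▸ (K.add_mem hxK hcjxK)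
    have ha0 := claim2 a haK
    rw [ha0] at ha
    simp only [TensorProduct.tmul_zero] at ha
    have h2 : cj (Complex.I • x - Complex.I • cj x) = Complex.I • x - Complex.I • cj x := by
      rw [map_sub, hcj_smul, hcj_smul, hcj_invol, Complex.conj_I, neg_smul, neg_smul]
      abel
    obtain ⟨b, hbeq⟩ := hcj_real _ h2
    have hbK : (1:ℂ) ⊗ₜ[ℝ] b ∈ K :=
      hbeq ▸ K.sub_mem (K.smul_mem _ hxK) (K.smul_mem _ hcjxK)
    have hb0 := claim2 b hbK
    rw [hb0] at hbeq
    simp only [TensorProduct.tmul_zero] at hbeq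
    have hxc : x - cj x = 0 := by
      have hI : Complex.I • (x - cj x) = 0 := by rw [smul_sub]; exact hbeq
      rcases smul_eq_zero.mp hI with h | h
      · exact absurd h Complex.I_ne_zero
      · exact h
    have h2x : (2:ℂ) • x = 0 := by
      rw [two_smul]
      have : x + x = (x + cj x) + (x - cj x) := by abel
      rw [this, ha, hxc, add_zero]
    rcases smul_eq_zero.mp h2x with h | h
    · exact absurd h two_ne_zero
    · exact h
  have hWrank : finrank ℂ (ℂ ⊗[ℝ] V) = 4*n := by
    rw [Module.finrank_baseChange, hdim]
  -- lower bound for the kernel dimension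
  have hge : 2*n ≤ finrank ℂ K := by
    by_contra hlt
    push_neg at hlt
    obtain ⟨e, f, hee, hff, hef⟩ := exists_symplectic (n+1) (ℂ ⊗[ℝ] V) ΩC hskew
      (by rw [hWrank]; rw [hKdef] at hlt; omega)
    set v : Fin (2*n+2) → ℂ ⊗[ℝ] V := fun k =>
      if (k:ℕ) % 2 = 0 then e ⟨(k:ℕ)/2, by have := k.2; omega⟩
      else f ⟨(k:ℕ)/2, by have := k.2; omega⟩ with hvdef
    have hS : ∀ a b : Fin (2*n+2), ΩC (v a) (v b) =
        if (a:ℕ)/2 = (b:ℕ)/2 ∧ a ≠ b then (if (a:ℕ)%2 = 0 then 1 else -1) else 0 := by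
      intro a b
      by_cases hpa : (a:ℕ) % 2 = 0 <;> by_cases hpb : (b:ℕ) % 2 = 0
      · rw [hvdef]
        simp only [if_pos hpa, if_pos hpb]
        rw [hee, if_neg]
        rintro ⟨h1, h2⟩
        exact h2 (Fin.ext (by omega))
      · rw [hvdef]
        simp only [if_pos hpa, if_neg hpb]
        rw [hef]
        by_cases h : (a:ℕ)/2 = (b:ℕ)/2
        · have hfin : (⟨(a:ℕ)/2, by have := a.2; omega⟩ : Fin (n+1)) =
              ⟨(b:ℕ)/2, by have := b.2; omega⟩ := Fin.ext h
          rw [if_pos hfin, if_pos ⟨h, fun hc => hpb (by rw [← hc]; exact hpa)⟩]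
        · rw [if_neg (fun hc => h (congrArg Fin.val hc)), if_neg (fun hc => h hc.1)]
      · rw [hvdef]
        simp only [if_neg hpa, if_pos hpb]
        rw [hskew, hef]
        by_cases h : (a:ℕ)/2 = (b:ℕ)/2
        · have hfin : (⟨(b:ℕ)/2, by have := b.2; omega⟩ : Fin (n+1)) =
              ⟨(a:ℕ)/2, by have := a.2; omega⟩ := Fin.ext h.symm
          rw [if_pos hfin, if_pos ⟨h, fun hc => hpa (by rw [hc]; exact hpb)⟩]
        · rw [if_neg (fun hc => h ((congrArg Fin.val hc).symm)), if_neg (fun hc => h hc.1)]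
          ring
      · rw [hvdef]
        simp only [if_neg hpa, if_neg hpb]
        rw [hff, if_neg]
        rintro ⟨h1, h2⟩
        exact h2 (Fin.ext (by omega))
    exact perm_sum_ne n (fun a b => ΩC (v a) (v b)) hS (hpow v)
  -- K' has the same dimension as K
  have eq1 : (↥K') ≃ₗ[ℝ] (↥K) := by
    refine
      { toFun := fun x => ⟨cj x, (hK'mem x).mp x.2⟩
        invFun := fun y => ⟨cj y, (hKmem' y).mp y.2⟩
        map_add' := fun x y => Subtype.ext ?_
        map_smul' := fun r x => Subtype.ext ?_
        left_inv := fun x => Subtype.ext ?_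
        right_inv := fun y => Subtype.ext ?_ }
    · simp [map_add]
    · simp
    · exact hcj_invol _
    · exact hcj_invol _
  have hfrK'K : finrank ℝ ↥K' = finrank ℝ ↥K := eq1.finrank_eq
  have hfr2K : finrank ℝ ↥K = 2 * finrank ℂ ↥K := by
    rw [← Complex.finrank_real_complex]
    exact (Module.finrank_mul_finrank ℝ ℂ ↥K).symm
  have hfr2K' : finrank ℝ ↥K' = 2 * finrank ℂ ↥K' := by
    rw [← Complex.finrank_real_complex]
    exact (Module.finrank_mul_finrank ℝ ℂ ↥K').symm
  have hfrK'c : finrank ℂ ↥K' = finrank ℂ ↥K := by omega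
  have hKK'bot : K ⊓ K' = ⊥ := by
    rw [eq_bot_iff]
    intro x hx
    rw [Submodule.mem_inf] at hx
    exact (Submodule.mem_bot ℂ).mpr (hdisj x hx.1 hx.2)
  have hsum := Submodule.finrank_sup_add_finrank_inf_eq K K'
  rw [hKK'bot, finrank_bot, add_zero] at hsum
  have hsuple : finrank ℂ ↥(K ⊔ K') ≤ 4*n := hWrank ▸ Submodule.finrank_le _
  have hKdim : finrank ℂ ↥K = 2*n := by omega
  have htop : K ⊔ K' = ⊤ := Submodule.eq_top_of_finrank_eq (by rw [hWrank]; omega)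
  have hcompl : IsCompl K K' := ⟨disjoint_iff.mpr hKK'bot, codisjoint_iff.mpr htop⟩
  -- the complex structure on the complexification
  set pK := K.linearProjOfIsCompl K' hcompl with hpKdef
  set pK' := K'.linearProjOfIsCompl K hcompl.symm with hpK'def
  set JW : (ℂ ⊗[ℝ] V) →ₗ[ℂ] (ℂ ⊗[ℝ] V) :=
    (-Complex.I) • (K.subtype ∘ₗ pK) + Complex.I • (K'.subtype ∘ₗ pK') with hJWdef
  have hJWapp : ∀ x, JW x = (-Complex.I) • (pK x : ℂ ⊗[ℝ] V)
      + Complex.I • (pK' x : ℂ ⊗[ℝ] V) := fun x => rfl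
  have hdec : ∀ x : ℂ ⊗[ℝ] V, (pK x : ℂ ⊗[ℝ] V) + (pK' x : ℂ ⊗[ℝ] V) = x := fun x =>
    Submodule.projection_add_projection_eq_self hcompl x
  have hJWK : ∀ x, x ∈ K → JW x = (-Complex.I) • x := by
    intro x hx
    rw [hJWapp]
    have h1 : pK x = ⟨x, hx⟩ := Submodule.linearProjOfIsCompl_apply_left hcompl ⟨x, hx⟩
    have h2 : pK' x = 0 := Submodule.projectionOnto_apply_of_mem_right hcompl.symm hx
    rw [h1, h2]
    simp
  have hJWK' : ∀ x, x ∈ K' → JW x = Complex.I • x := by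
    intro x hx
    rw [hJWapp]
    have h1 : pK' x = ⟨x, hx⟩ := Submodule.linearProjOfIsCompl_apply_left hcompl.symm ⟨x, hx⟩
    have h2 : pK x = 0 := Submodule.projectionOnto_apply_of_mem_right hcompl hx
    rw [h1, h2]
    simp
  have hJWsq : ∀ x, JW (JW x) = -x := by
    intro x
    rw [hJWapp x, map_add, map_smul, map_smul, hJWK _ (pK x).2, hJWK' _ (pK' x).2,
      smul_smul, smul_smul, neg_mul_neg, Complex.I_mul_I,
      neg_one_smul, neg_one_smul, ← neg_add, hdec]
  have hJWcj : ∀ x, cj (JW x) = JW (cj x) := by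
    intro x
    have hstep : cj (JW x) = Complex.I • cj (pK x : ℂ ⊗[ℝ] V)
        + (-Complex.I) • cj (pK' x : ℂ ⊗[ℝ] V) := by
      rw [hJWapp, map_add, hcj_smul, hcj_smul, map_neg, Complex.conj_I, neg_neg]
    have hm1 : cj (pK x : ℂ ⊗[ℝ] V) ∈ K' := (hKmem' _).mp (pK x).2
    have hm2 : cj (pK' x : ℂ ⊗[ℝ] V) ∈ K := (hK'mem _).mp (pK' x).2
    rw [hstep, ← hJWK' _ hm1, ← hJWK _ hm2, ← map_add, ← map_add, hdec]
  -- the real complex structure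
  set J : V →ₗ[ℝ] V := L ∘ₗ (JW.restrictScalars ℝ) ∘ₗ ι with hJdef
  have hJv : ∀ v : V, (1:ℂ) ⊗ₜ[ℝ] (J v) = JW ((1:ℂ) ⊗ₜ[ℝ] v) := by
    intro v
    have hfix : cj (JW ((1:ℂ) ⊗ₜ[ℝ] v)) = JW ((1:ℂ) ⊗ₜ[ℝ] v) := by
      rw [hJWcj]
      congr 1
      rw [hcjt]
      simp
    obtain ⟨a, ha⟩ := hcj_real _ hfix
    have hJa : J v = a := by
      have : J v = L (JW ((1:ℂ) ⊗ₜ[ℝ] v)) := rfl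
      rw [this, ha, hL1]
    rw [hJa, ha]
  have hJJ : ∀ v, J (J v) = -v := by
    intro v
    have h1 : (1:ℂ) ⊗ₜ[ℝ] (J (J v)) = (1:ℂ) ⊗ₜ[ℝ] (-v) := by
      rw [hJv, hJv, hJWsq, TensorProduct.tmul_neg]
    have h2 : (1:ℂ) ⊗ₜ[ℝ] (J (J v) - (-v)) = 0 := by
      rw [TensorProduct.tmul_sub, h1, sub_self]
    exact sub_eq_zero.mp (hιinj _ h2)
  have hbase : ∀ (Jr : V →ₗ[ℝ] V),
      (∀ v, (1:ℂ) ⊗ₜ[ℝ] (Jr v) = JW ((1:ℂ) ⊗ₜ[ℝ] v)) →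
      LinearMap.baseChange ℂ Jr = JW := by
    intro Jr hJr
    apply LinearMap.ext
    intro x
    induction x using TensorProduct.induction_on with
    | zero => simp
    | tmul c v0 =>
      have hc : (c:ℂ) ⊗ₜ[ℝ] v0 = c • ((1:ℂ) ⊗ₜ[ℝ] v0) := by
        rw [TensorProduct.smul_tmul']; simp
      have hc2 : (c:ℂ) ⊗ₜ[ℝ] (Jr v0) = c • ((1:ℂ) ⊗ₜ[ℝ] (Jr v0)) := by
        rw [TensorProduct.smul_tmul']; simp
      rw [LinearMap.baseChange_tmul, hc2, hJr v0, hc, map_smul]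
    | add x1 x2 h1 h2 =>
      rw [map_add, map_add, h1, h2]
  have heig : ∀ x, JW x = (-Complex.I) • x ↔ x ∈ K := by
    intro x
    constructor
    · intro hx
      have e1 : (-Complex.I) • (pK x : ℂ ⊗[ℝ] V) + Complex.I • (pK' x : ℂ ⊗[ℝ] V)
          = (-Complex.I) • (pK x : ℂ ⊗[ℝ] V) + (-Complex.I) • (pK' x : ℂ ⊗[ℝ] V) := by
        rw [← hJWapp, hx]
        conv_lhs => rw [← hdec x]
        rw [smul_add]
      have e2 : Complex.I • (pK' x : ℂ ⊗[ℝ] V) = (-Complex.I) • (pK' x : ℂ ⊗[ℝ] V) :=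
        add_left_cancel e1
      have e3 : (Complex.I - (-Complex.I)) • (pK' x : ℂ ⊗[ℝ] V) = 0 := by
        rw [sub_smul, e2, sub_self]
      have e4 : (pK' x : ℂ ⊗[ℝ] V) = 0 := by
        rcases smul_eq_zero.mp e3 with h | h
        · exfalso
          rw [sub_neg_eq_add, ← two_mul] at h
          rcases mul_eq_zero.mp h with h' | h'
          · exact two_ne_zero h'
          · exact Complex.I_ne_zero h'
        · exact h
      have hxk : x = (pK x : ℂ ⊗[ℝ] V) := by
        conv_lhs => rw [← hdec x]
        rw [e4, add_zero]
      rw [hxk]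
      exact (pK x).2
    · exact hJWK x
  -- conclusion
  refine ⟨hKdim, claim2, ⟨J, ⟨?_, ?_⟩, ?_⟩⟩
  · apply LinearMap.ext
    intro v
    have h0 : (J * J) v = J (J v) := rfl
    rw [h0, hJJ]
    rfl
  · have hb := hbase J hJv
    ext x
    rw [Module.End.mem_eigenspace_iff]
    change LinearMap.baseChange ℂ J x = -Complex.I • x ↔ _
    rw [hb]
    exact heig x
  · rintro J₂ ⟨hsq₂, heig₂⟩
    have hb₂ : ∀ x, x ∈ K → LinearMap.baseChange ℂ (J₂ : V →ₗ[ℝ] V) x = -Complex.I • x := by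
      intro x hx
      have hmem : x ∈ Module.End.eigenspace
          (LinearMap.baseChange ℂ (J₂ : V →ₗ[ℝ] V)) (-Complex.I) := by
        rw [heig₂]; exact hx
      exact Module.End.mem_eigenspace_iff.mp hmem
    have hcomm : ∀ x, cj (LinearMap.baseChange ℂ (J₂ : V →ₗ[ℝ] V) x)
        = LinearMap.baseChange ℂ (J₂ : V →ₗ[ℝ] V) (cj x) := by
      intro x
      induction x using TensorProduct.induction_on with
      | zero => simp
      | tmul c v0 => rw [LinearMap.baseChange_tmul, hcjt, hcjt, LinearMap.baseChange_tmul]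
      | add x1 x2 h1 h2 => simp only [map_add, h1, h2]
    have hK'₂ : ∀ x, x ∈ K' → LinearMap.baseChange ℂ (J₂ : V →ₗ[ℝ] V) x = Complex.I • x := by
      intro x hx
      have h1 : cj x ∈ K := (hK'mem x).mp hx
      have h2 := congrArg cj (hb₂ _ h1)
      rw [hcomm, hcj_invol, hcj_smul, map_neg, Complex.conj_I, neg_neg, hcj_invol] at h2
      exact h2
    have hJ₂W : ∀ x, LinearMap.baseChange ℂ (J₂ : V →ₗ[ℝ] V) x = JW x := by
      intro x
      conv_lhs => rw [← hdec x]
      rw [map_add, hb₂ _ (pK x).2, hK'₂ _ (pK' x).2, hJWapp]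
    apply LinearMap.ext
    intro v
    have h1 : (1:ℂ) ⊗ₜ[ℝ] (J₂ v) = (1:ℂ) ⊗ₜ[ℝ] (J v) := by
      have e1 : (1:ℂ) ⊗ₜ[ℝ] (J₂ v) =
          LinearMap.baseChange ℂ (J₂ : V →ₗ[ℝ] V) ((1:ℂ) ⊗ₜ[ℝ] v) :=
        (LinearMap.baseChange_tmul _ _ _).symm
      rw [e1, hJ₂W, ← hJv]
    have h2 : (1:ℂ) ⊗ₜ[ℝ] (J₂ v - J v) = 0 := by
      rw [TensorProduct.tmul_sub, h1, sub_self]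
    exact sub_eq_zero.mp (hιinj _ h2)
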